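/- arXiv:math/0405442 — 4 statements merged into one kernel-verified Lean document; each statement's English description precedes it below -/
import Mathlib

section
/- Let p be a prime and g ≥ 1 an integer. Let a_0, b_2, …, b_g be nonzero complex numbers, set b_1 := p, and assume a_0² · ∏_{i=1}^g b_i = p^{g(g+1)/2}. Then 𝔪_{p,g} = 1 and 𝔪_p²/(p+1)² + Σ_{i=1}^g Y_i · 𝔪_{p,i} = 0. -/
/-- `R p n i` is the number of symmetric `n × n` matrices with entries in `𝔽_p = ZMod p`
whose rank equals `n - i`. -/
noncomputable def symmRankCount (p n i : ℕ) : ℕ :=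
  Nat.card {A : Matrix (Fin n) (Fin n) (ZMod p) // A.IsSymm ∧ A.rank = n - i}

lemma symmRankCount_self (p : ℕ) (hp : p.Prime) (n : ℕ) : symmRankCount p n n = 1 := by
  haveI : Fact p.Prime := ⟨hp⟩
  have hiff : ∀ A : Matrix (Fin n) (Fin n) (ZMod p), A.rank = 0 → A = 0 := by
    intro A h
    have h2 : Module.finrank (ZMod p) (LinearMap.range A.mulVecLin) = 0 := h
    rw [Submodule.finrank_eq_zero] at h2
    have h3 : A.mulVecLin = 0 := LinearMap.range_eq_bot.mp h2
    ext i j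
    have h4 : A.mulVecLin (Pi.single j 1) i = 0 := by rw [h3]; rfl
    simpa [Matrix.mulVecLin_apply, Matrix.mulVec_single] using h4
  haveI : Unique {A : Matrix (Fin n) (Fin n) (ZMod p) // A.IsSymm ∧ A.rank = n - n} :=
    { default := ⟨(0 : Matrix (Fin n) (Fin n) (ZMod p)), Matrix.isSymm_zero, by
        rw [Matrix.rank_zero, Nat.sub_self]⟩
      uniq := by
        rintro ⟨A, hs, hr⟩
        apply Subtype.ext
        exact hiff A (by rw [hr, Nat.sub_self]) }
  have h5 : Nat.card {A : Matrix (Fin n) (Fin n) (ZMod p) // A.IsSymm ∧ A.rank = n - n} = 1 :=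
    Nat.card_unique
  exact h5

lemma key_sum (u v : ℂ) (huv : u * v = 1) (c : ℕ → ℂ) (N : ℕ) :
    (∑ j ∈ Finset.range (N + 1), c j * u ^ j) * (∑ k ∈ Finset.range (N + 1), c k * v ^ k) =
      (∑ j ∈ Finset.range (N + 1), c j) ^ 2 +
        ∑ j ∈ Finset.range (N + 1), ∑ k ∈ Finset.Icc (j + 1) N,
          c j * c k * (u ^ (k - j) + v ^ (k - j) - 2) := by
  induction N with
  | zero => simp; ring
  | succ N ih =>
    have hab : (c (N+1) * u ^ (N+1)) * (c (N+1) * v ^ (N+1)) = c (N+1) * c (N+1) := by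
      have h1 : u ^ (N+1) * v ^ (N+1) = 1 := by rw [← mul_pow, huv, one_pow]
      linear_combination c (N+1) * c (N+1) * h1
    have e3 : ∑ j ∈ Finset.range (N+1), c j * c (N+1) * (u ^ (N+1-j) + v ^ (N+1-j) - 2)
        = (∑ j ∈ Finset.range (N+1), c j * u ^ j) * (c (N+1) * v ^ (N+1))
          + (∑ j ∈ Finset.range (N+1), c j * v ^ j) * (c (N+1) * u ^ (N+1))
          - (∑ j ∈ Finset.range (N+1), c j) * (2 * c (N+1)) := by
      rw [Finset.sum_mul, Finset.sum_mul, Finset.sum_mul, ← Finset.sum_add_distrib,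
        ← Finset.sum_sub_distrib]
      refine Finset.sum_congr rfl fun j hj => ?_
      rw [Finset.mem_range] at hj
      have hu : u ^ (N+1) = u ^ (N+1-j) * u ^ j := by rw [← pow_add]; congr 1; omega
      have hv : v ^ (N+1) = v ^ (N+1-j) * v ^ j := by rw [← pow_add]; congr 1; omega
      have h1 : u ^ j * v ^ j = 1 := by rw [← mul_pow, huv, one_pow]
      rw [hu, hv]
      linear_combination (-(c j * c (N+1)) * (u ^ (N+1-j) + v ^ (N+1-j))) * h1
    have e1 : ∑ j ∈ Finset.range (N+1), ∑ k ∈ Finset.Icc (j+1) (N+1),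
          c j * c k * (u ^ (k - j) + v ^ (k - j) - 2)
        = (∑ j ∈ Finset.range (N+1), ∑ k ∈ Finset.Icc (j+1) N,
            c j * c k * (u ^ (k - j) + v ^ (k - j) - 2))
          + ∑ j ∈ Finset.range (N+1), c j * c (N+1) * (u ^ (N+1-j) + v ^ (N+1-j) - 2) := by
      rw [← Finset.sum_add_distrib]
      refine Finset.sum_congr rfl fun j hj => ?_
      rw [Finset.mem_range] at hj
      rw [Finset.sum_Icc_succ_top (by omega)]
    rw [Finset.sum_range_succ (fun j => c j * u ^ j) (N+1),
      Finset.sum_range_succ (fun k => c k * v ^ k) (N+1),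
      Finset.sum_range_succ (fun j => c j) (N+1),
      Finset.sum_range_succ (fun j => ∑ k ∈ Finset.Icc (j+1) (N+1),
        c j * c k * (u ^ (k - j) + v ^ (k - j) - 2)) (N+1),
      Finset.Icc_eq_empty (by omega), Finset.sum_empty, add_zero, e1, e3]
    linear_combination ih + hab

lemma esymm_sum (s : Finset ℕ) (b : ℕ → ℂ) (x : ℂ) :
    ∑ m ∈ Finset.range (s.card + 1),
        (∑ I ∈ s.powersetCard m, ∏ i ∈ I, b i) * x ^ m
      = ∏ i ∈ s, (1 + b i * x) := by
  calc ∑ m ∈ Finset.range (s.card + 1), (∑ I ∈ s.powersetCard m, ∏ i ∈ I, b i) * x ^ m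
      = ∑ m ∈ Finset.range (s.card + 1), ∑ I ∈ s.powersetCard m, (∏ i ∈ I, b i) * x ^ m := by
        refine Finset.sum_congr rfl fun m _ => ?_
        rw [Finset.sum_mul]
    _ = ∑ m ∈ Finset.range (s.card + 1), ∑ I ∈ s.powersetCard m,
          (∏ i ∈ I, b i) * x ^ I.card := by
        refine Finset.sum_congr rfl fun m _ => Finset.sum_congr rfl fun I hI => ?_
        rw [(Finset.mem_powersetCard.mp hI).2]
    _ = ∑ I ∈ s.powerset, (∏ i ∈ I, b i) * x ^ I.card := (Finset.sum_powerset s _).symm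
    _ = ∑ I ∈ s.powerset, (∏ i ∈ I, (b i * x)) * ∏ i ∈ (s \ I), (1 : ℂ) := by
        refine Finset.sum_congr rfl fun I _ => ?_
        rw [Finset.prod_mul_distrib, Finset.prod_const, Finset.prod_const_one, mul_one]
    _ = ∏ i ∈ s, (b i * x + 1) := (Finset.prod_add _ _ s).symm
    _ = ∏ i ∈ s, (1 + b i * x) := by
        refine Finset.prod_congr rfl fun i _ => ?_
        ring

lemma S_formula (p : ℕ) (hp : p.Prime) (Y : ℕ → ℂ) (hY1 : Y 1 = -1)
    (hYrec : ∀ n, 2 ≤ n →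
      (∑ i ∈ Finset.Icc 1 (n - 1), Y i * (symmRankCount p (n - 1) i : ℂ)) * (1 + (p : ℂ) ^ 2) *
          ((p : ℂ) ^ ((n - 1) * n / 2))⁻¹ +
        (∑ i ∈ Finset.Icc 1 n, Y i * (symmRankCount p n i : ℂ)) * (p : ℂ) *
          ((p : ℂ) ^ (n * (n + 1) / 2))⁻¹ +
        (∑ i ∈ Finset.Icc 1 (n - 2), Y i * (symmRankCount p (n - 2) i : ℂ)) * (p : ℂ) *
          ((p : ℂ) ^ ((n - 2) * (n - 1) / 2))⁻¹ + 2 = 0) :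
    ∀ n : ℕ, (∑ i ∈ Finset.Icc 1 n, Y i * (symmRankCount p n i : ℂ)) *
        ((p : ℂ) ^ (n * (n + 1) / 2))⁻¹
      = ((-(p : ℂ)⁻¹) ^ n + (-(p : ℂ)) ^ n - 2) / ((p : ℂ) + 1) ^ 2 := by
  have hq : (p : ℂ) ≠ 0 := Nat.cast_ne_zero.mpr hp.pos.ne'
  have hq1 : (p : ℂ) + 1 ≠ 0 := by
    have : ((p + 1 : ℕ) : ℂ) ≠ 0 := Nat.cast_ne_zero.mpr (by omega)
    simpa using this
  set q : ℂ := (p : ℂ) with hqdef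
  suffices h : ∀ n : ℕ,
      ((∑ i ∈ Finset.Icc 1 n, Y i * (symmRankCount p n i : ℂ)) * (q ^ (n * (n + 1) / 2))⁻¹
        = ((-q⁻¹) ^ n + (-q) ^ n - 2) / (q + 1) ^ 2) ∧
      ((∑ i ∈ Finset.Icc 1 (n+1), Y i * (symmRankCount p (n+1) i : ℂ)) *
          (q ^ ((n+1) * (n+1+1) / 2))⁻¹
        = ((-q⁻¹) ^ (n+1) + (-q) ^ (n+1) - 2) / (q + 1) ^ 2) by
    intro n; exact (h n).1
  intro n
  induction n with
  | zero =>
    constructor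
    · norm_num
    · have h11 : symmRankCount p 1 1 = 1 := symmRankCount_self p hp 1
      rw [show (0:ℕ)+1 = 1 from rfl]
      rw [Finset.Icc_self, Finset.sum_singleton, h11, hY1]
      rw [show 1 * (1+1) / 2 = 1 from rfl]
      push_cast
      field_simp
      ring
  | succ n ih =>
    obtain ⟨h0, h1⟩ := ih
    refine ⟨h1, ?_⟩
    have h := hYrec (n+2) (by omega)
    have h' : (∑ i ∈ Finset.Icc 1 (n+1), Y i * (symmRankCount p (n+1) i : ℂ)) * (1 + q ^ 2) *
          (q ^ ((n+1) * (n+1+1) / 2))⁻¹ +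
        (∑ i ∈ Finset.Icc 1 (n+2), Y i * (symmRankCount p (n+2) i : ℂ)) * q *
          (q ^ ((n+2) * (n+2+1) / 2))⁻¹ +
        (∑ i ∈ Finset.Icc 1 n, Y i * (symmRankCount p n i : ℂ)) * q *
          (q ^ (n * (n+1) / 2))⁻¹ + 2 = 0 := h
    have h'' : ((-q⁻¹) ^ (n+1) + (-q) ^ (n+1) - 2) / (q + 1) ^ 2 * (1 + q ^ 2) +
        (∑ i ∈ Finset.Icc 1 (n+2), Y i * (symmRankCount p (n+2) i : ℂ)) *
          (q ^ ((n+2) * (n+2+1) / 2))⁻¹ * q +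
        ((-q⁻¹) ^ n + (-q) ^ n - 2) / (q + 1) ^ 2 * q + 2 = 0 := by
      rw [← h0, ← h1]
      linear_combination h'
    have hid2 : ((-q⁻¹) ^ (n+2) + (-q) ^ (n+2) - 2) / (q + 1) ^ 2 * q
        = -(((-q⁻¹) ^ (n+1) + (-q) ^ (n+1) - 2) / (q + 1) ^ 2 * (1 + q ^ 2)
            + ((-q⁻¹) ^ n + (-q) ^ n - 2) / (q + 1) ^ 2 * q + 2) := by
      have gen : ∀ X Z : ℂ,
          (X * -q⁻¹ * -q⁻¹ + Z * -q * -q - 2) / (q+1)^2 * q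
            = -((X * -q⁻¹ + Z * -q - 2)/(q+1)^2 * (1+q^2) + (X + Z - 2)/(q+1)^2 * q + 2) := by
        intro X Z
        field_simp
        ring
      have e2 : ∀ x : ℂ, x ^ (n+2) = x ^ n * x * x := fun x => by ring
      have e1 : ∀ x : ℂ, x ^ (n+1) = x ^ n * x := fun x => by ring
      rw [e2, e2, e1, e1]
      exact gen _ _
    apply mul_right_cancel₀ hq
    rw [hid2]
    linear_combination h''

theorem stmt_0 (p : ℕ) (hp : p.Prime) (g : ℕ) (hg : 1 ≤ g)
    (a0 : ℂ) (b : ℕ → ℂ) (ha0 : a0 ≠ 0)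
    (hbne : ∀ i ∈ Finset.Icc 2 g, b i ≠ 0) (hb1 : b 1 = (p : ℂ))
    (hrel : a0 ^ 2 * ∏ i ∈ Finset.Icc 1 g, b i = (p : ℂ) ^ (g * (g + 1) / 2))
    (Y : ℕ → ℂ) (hY1 : Y 1 = -1)
    (hYrec : ∀ n, 2 ≤ n →
      (∑ i ∈ Finset.Icc 1 (n - 1), Y i * (symmRankCount p (n - 1) i : ℂ)) * (1 + (p : ℂ) ^ 2) *
          ((p : ℂ) ^ ((n - 1) * n / 2))⁻¹ +
        (∑ i ∈ Finset.Icc 1 n, Y i * (symmRankCount p n i : ℂ)) * (p : ℂ) *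
          ((p : ℂ) ^ (n * (n + 1) / 2))⁻¹ +
        (∑ i ∈ Finset.Icc 1 (n - 2), Y i * (symmRankCount p (n - 2) i : ℂ)) * (p : ℂ) *
          ((p : ℂ) ^ ((n - 2) * (n - 1) / 2))⁻¹ + 2 = 0) :
    let e : ℕ → ℂ := fun m => ∑ I ∈ (Finset.Icc 1 g).powersetCard m, ∏ i ∈ I, b i
    let mp : ℂ := a0 * ∏ i ∈ Finset.Icc 1 g, (1 + b i)
    let mpi : ℕ → ℂ := fun i => a0 ^ 2 *
      ∑ j ∈ Finset.range (g + 1), ∑ k ∈ Finset.Icc (j + i) g,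
        (symmRankCount p (k - j) i : ℂ) * ((p : ℂ) ^ ((k - j) * (k - j + 1) / 2))⁻¹ * e j * e k
    mpi g = 1 ∧ mp ^ 2 / ((p : ℂ) + 1) ^ 2 + ∑ i ∈ Finset.Icc 1 g, Y i * mpi i = 0 := by
  have hq : (p : ℂ) ≠ 0 := Nat.cast_ne_zero.mpr hp.pos.ne'
  have hq1 : (p : ℂ) + 1 ≠ 0 := by
    have : ((p + 1 : ℕ) : ℂ) ≠ 0 := Nat.cast_ne_zero.mpr (by omega)
    simpa using this
  have hcard : (Finset.Icc 1 g).card = g := by rw [Nat.card_Icc]; omega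
  intro e mp mpi
  have he0 : e 0 = 1 := by
    show (∑ I ∈ (Finset.Icc 1 g).powersetCard 0, ∏ i ∈ I, b i) = 1
    rw [Finset.powersetCard_zero, Finset.sum_singleton, Finset.prod_empty]
  have heg : e g = ∏ i ∈ Finset.Icc 1 g, b i := by
    have hps := Finset.powersetCard_self (Finset.Icc 1 g)
    rw [hcard] at hps
    show (∑ I ∈ (Finset.Icc 1 g).powersetCard g, ∏ i ∈ I, b i) = ∏ i ∈ Finset.Icc 1 g, b i
    rw [hps, Finset.sum_singleton]
  constructor
  · -- mpi g = 1
    show a0 ^ 2 * ∑ j ∈ Finset.range (g + 1), ∑ k ∈ Finset.Icc (j + g) g,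
        (symmRankCount p (k - j) g : ℂ) * ((p : ℂ) ^ ((k - j) * (k - j + 1) / 2))⁻¹ * e j * e k = 1
    rw [Finset.sum_eq_single_of_mem 0 (by simp) (fun j hj hne => by
      rw [Finset.Icc_eq_empty (by
        rw [Finset.mem_range] at hj
        omega), Finset.sum_empty])]
    rw [zero_add, Finset.Icc_self, Finset.sum_singleton]
    simp only [Nat.sub_zero]
    rw [symmRankCount_self p hp g, he0, heg, Nat.cast_one]
    have hXne : ((p : ℂ) ^ (g * (g + 1) / 2)) ≠ 0 := pow_ne_zero _ hq
    have h2 : a0 ^ 2 * (1 * ((p : ℂ) ^ (g * (g + 1) / 2))⁻¹ * 1 * ∏ i ∈ Finset.Icc 1 g, b i)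
        = ((p : ℂ) ^ (g * (g + 1) / 2)) * ((p : ℂ) ^ (g * (g + 1) / 2))⁻¹ := by
      rw [← hrel]; ring
    rw [h2, mul_inv_cancel₀ hXne]
  · -- main identity
    have hS := S_formula p hp Y hY1 hYrec
    have huv : (-(p : ℂ)⁻¹) * (-(p : ℂ)) = 1 := by
      rw [neg_mul_neg, inv_mul_cancel₀ hq]
    have hswap : ∑ i ∈ Finset.Icc 1 g, Y i * mpi i
        = ∑ j ∈ Finset.range (g + 1), ∑ k ∈ Finset.Icc (j + 1) g,
            a0 ^ 2 * ((∑ i ∈ Finset.Icc 1 (k - j), Y i * (symmRankCount p (k - j) i : ℂ)) *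
              ((p : ℂ) ^ ((k - j) * (k - j + 1) / 2))⁻¹) * e j * e k := by
      calc ∑ i ∈ Finset.Icc 1 g, Y i * mpi i
          = ∑ i ∈ Finset.Icc 1 g, ∑ j ∈ Finset.range (g + 1), ∑ k ∈ Finset.Icc (j + i) g,
              a0 ^ 2 * (Y i * ((symmRankCount p (k - j) i : ℂ) *
                ((p : ℂ) ^ ((k - j) * (k - j + 1) / 2))⁻¹ * e j * e k)) := by
            refine Finset.sum_congr rfl fun i _ => ?_
            show Y i * (a0 ^ 2 * ∑ j ∈ Finset.range (g + 1), ∑ k ∈ Finset.Icc (j + i) g,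
              (symmRankCount p (k - j) i : ℂ) *
                ((p : ℂ) ^ ((k - j) * (k - j + 1) / 2))⁻¹ * e j * e k) = _
            simp only [Finset.mul_sum]
            exact Finset.sum_congr rfl fun j _ => Finset.sum_congr rfl fun k _ => by ring
        _ = ∑ j ∈ Finset.range (g + 1), ∑ i ∈ Finset.Icc 1 g, ∑ k ∈ Finset.Icc (j + i) g,
              a0 ^ 2 * (Y i * ((symmRankCount p (k - j) i : ℂ) *
                ((p : ℂ) ^ ((k - j) * (k - j + 1) / 2))⁻¹ * e j * e k)) := Finset.sum_comm
        _ = ∑ j ∈ Finset.range (g + 1), ∑ k ∈ Finset.Icc (j + 1) g, ∑ i ∈ Finset.Icc 1 (k - j),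
              a0 ^ 2 * (Y i * ((symmRankCount p (k - j) i : ℂ) *
                ((p : ℂ) ^ ((k - j) * (k - j + 1) / 2))⁻¹ * e j * e k)) := by
            refine Finset.sum_congr rfl fun j _ => ?_
            refine Finset.sum_comm' ?_
            intro i k
            simp only [Finset.mem_Icc, Finset.mem_range]
            omega
        _ = _ := by
            refine Finset.sum_congr rfl fun j _ => Finset.sum_congr rfl fun k _ => ?_
            simp only [Finset.sum_mul, Finset.mul_sum]
            exact Finset.sum_congr rfl fun i _ => by ring
    have hT : ∑ i ∈ Finset.Icc 1 g, Y i * mpi i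
        = ∑ j ∈ Finset.range (g + 1), ∑ k ∈ Finset.Icc (j + 1) g,
            a0 ^ 2 * (((-(p : ℂ)⁻¹) ^ (k - j) + (-(p : ℂ)) ^ (k - j) - 2) / ((p : ℂ) + 1) ^ 2) *
              e j * e k := by
      rw [hswap]
      refine Finset.sum_congr rfl fun j _ => Finset.sum_congr rfl fun k _ => ?_
      rw [hS (k - j)]
    have hT2 : ∑ j ∈ Finset.range (g + 1), ∑ k ∈ Finset.Icc (j + 1) g,
          a0 ^ 2 * (((-(p : ℂ)⁻¹) ^ (k - j) + (-(p : ℂ)) ^ (k - j) - 2) / ((p : ℂ) + 1) ^ 2) *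
            e j * e k
        = a0 ^ 2 / ((p : ℂ) + 1) ^ 2 * ∑ j ∈ Finset.range (g + 1), ∑ k ∈ Finset.Icc (j + 1) g,
            e j * e k * ((-(p : ℂ)⁻¹) ^ (k - j) + (-(p : ℂ)) ^ (k - j) - 2) := by
      rw [Finset.mul_sum]
      refine Finset.sum_congr rfl fun j _ => ?_
      rw [Finset.mul_sum]
      exact Finset.sum_congr rfl fun k _ => by ring
    have hFu : (∑ j ∈ Finset.range (g + 1), e j * (-(p : ℂ)⁻¹) ^ j) = 0 := by
      have hes := esymm_sum (Finset.Icc 1 g) b (-(p : ℂ)⁻¹)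
      rw [hcard] at hes
      have h0 : (1 : ℂ) + b 1 * (-(p : ℂ)⁻¹) = 0 := by
        rw [hb1]
        field_simp
        norm_num
      calc (∑ j ∈ Finset.range (g + 1), e j * (-(p : ℂ)⁻¹) ^ j)
          = ∏ i ∈ Finset.Icc 1 g, (1 + b i * (-(p : ℂ)⁻¹)) := hes
        _ = 0 := Finset.prod_eq_zero (Finset.mem_Icc.mpr ⟨le_refl 1, hg⟩) h0
    have hF1 : (∑ j ∈ Finset.range (g + 1), e j) = ∏ i ∈ Finset.Icc 1 g, (1 + b i) := by
      have hes := esymm_sum (Finset.Icc 1 g) b 1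
      rw [hcard] at hes
      simp only [one_pow, mul_one] at hes
      exact hes
    have hdouble : ∑ j ∈ Finset.range (g + 1), ∑ k ∈ Finset.Icc (j + 1) g,
          e j * e k * ((-(p : ℂ)⁻¹) ^ (k - j) + (-(p : ℂ)) ^ (k - j) - 2)
        = -(∏ i ∈ Finset.Icc 1 g, (1 + b i)) ^ 2 := by
      have hkey := key_sum (-(p : ℂ)⁻¹) (-(p : ℂ)) huv e g
      rw [hFu, hF1, zero_mul] at hkey
      linear_combination -hkey
    rw [hT, hT2, hdouble]
    show (a0 * ∏ i ∈ Finset.Icc 1 g, (1 + b i)) ^ 2 / ((p : ℂ) + 1) ^ 2 +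
        a0 ^ 2 / ((p : ℂ) + 1) ^ 2 * -(∏ i ∈ Finset.Icc 1 g, (1 + b i)) ^ 2 = 0
    ring
end

section
/- Let k ≥ 1 and 𝔟_1,…,𝔟_k ≥ 1 be integers, g = 𝔟_1+⋯+𝔟_k, m_l = 𝔟_1+⋯+𝔟_{l−1}, and let 0 ≤ c_l ≤ 𝔟_l with c_1 = 0; set I := ∪_{l=1}^k {m_l+1,…,m_l+c_l} and s := c_1+⋯+c_k. Then the number of pairs (i,j) with 1 ≤ i ≤ j ≤ g, i ∉ I, j ∉ I, and not both i and j in the first block {1,…,𝔟_1}, plus the number of pairs (i,j) with 1 ≤ i < j ≤ g, i ∈ I, j ∉ I and blk(i) ≠ blk(j), equals (g−s)(g+1−s)/2 + Σ_{2 ≤ l < l' ≤ k} c_l 𝔟_{l'} − Σ_{1 ≤ l < l' ≤ k} c_l c_{l'} − 𝔟_1(𝔟_1+1)/2. -/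
lemma tri_count (S : Finset ℕ) :
    2 * ((S ×ˢ S).filter fun q => q.1 ≤ q.2).card = S.card * (S.card + 1) := by
  classical
  set L := (S ×ˢ S).filter fun q => q.1 ≤ q.2 with hL
  set G := (S ×ˢ S).filter fun q => q.2 ≤ q.1 with hG
  have hLG : L.card = G.card := by
    apply Finset.card_bij (fun q _ => q.swap)
    · intro q hq
      simp only [hL, hG, Finset.mem_filter, Finset.mem_product] at *
      exact ⟨⟨hq.1.2, hq.1.1⟩, hq.2⟩
    · intro a _ b _ h
      exact Prod.swap_injective h
    · intro b hb
      simp only [hL, hG, Finset.mem_filter, Finset.mem_product] at hb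
      exact ⟨b.swap, by
        simp only [hL, Finset.mem_filter, Finset.mem_product, Prod.fst_swap, Prod.snd_swap]
        exact ⟨⟨hb.1.2, hb.1.1⟩, hb.2⟩, by simp⟩
  have hu : L ∪ G = S ×ˢ S := by
    rw [hL, hG, ← Finset.filter_or]
    apply Finset.filter_true_of_mem
    intro q _; exact le_total q.1 q.2
  have hi : L ∩ G = S.diag := by
    rw [hL, hG, ← Finset.filter_and]
    ext q
    simp only [Finset.mem_filter, Finset.mem_product, Finset.mem_diag]
    constructor
    · rintro ⟨⟨h1, h2⟩, h3, h4⟩; exact ⟨h1, le_antisymm h3 h4⟩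
    · rintro ⟨h1, h2⟩
      cases q
      simp_all
  have key := Finset.card_union_add_card_inter L G
  rw [hu, hi, Finset.card_product, Finset.diag_card] at key
  calc 2 * L.card = L.card + G.card := by omega
    _ = S.card * S.card + S.card := key.symm
    _ = S.card * (S.card + 1) := by ring

theorem stmt_7 (k : ℕ) (hk : 1 ≤ k) (𝔟 c : ℕ → ℕ)
    (h𝔟 : ∀ l ∈ Finset.Icc 1 k, 1 ≤ 𝔟 l)
    (hc : ∀ l ∈ Finset.Icc 1 k, c l ≤ 𝔟 l) (hc1 : c 1 = 0) :
    let m : ℕ → ℕ := fun l => ∑ t ∈ Finset.Ico 1 l, 𝔟 t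
    let g : ℕ := ∑ l ∈ Finset.Icc 1 k, 𝔟 l
    let s : ℕ := ∑ l ∈ Finset.Icc 1 k, c l
    let I : Set ℕ := {i | ∃ l, 1 ≤ l ∧ l ≤ k ∧ m l + 1 ≤ i ∧ i ≤ m l + c l}
    let sameBlock : ℕ → ℕ → Prop := fun i j => ∃ l, 1 ≤ l ∧ l ≤ k ∧
      (m l + 1 ≤ i ∧ i ≤ m l + 𝔟 l) ∧ (m l + 1 ≤ j ∧ j ≤ m l + 𝔟 l)
    ({q : ℕ × ℕ | 1 ≤ q.1 ∧ q.1 ≤ q.2 ∧ q.2 ≤ g ∧ q.1 ∉ I ∧ q.2 ∉ I ∧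
            ¬ (q.1 ≤ 𝔟 1 ∧ q.2 ≤ 𝔟 1)}.ncard
        + {q : ℕ × ℕ | 1 ≤ q.1 ∧ q.1 < q.2 ∧ q.2 ≤ g ∧ q.1 ∈ I ∧ q.2 ∉ I ∧
            ¬ sameBlock q.1 q.2}.ncard : ℤ)
      = ((g : ℤ) - s) * ((g : ℤ) + 1 - s) / 2
        + ∑ l ∈ Finset.Icc 2 k, ∑ l' ∈ Finset.Icc (l + 1) k, (c l : ℤ) * (𝔟 l' : ℤ)
        - ∑ l ∈ Finset.Icc 1 k, ∑ l' ∈ Finset.Icc (l + 1) k, (c l : ℤ) * (c l' : ℤ)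
        - (𝔟 1 : ℤ) * ((𝔟 1 : ℤ) + 1) / 2 := by
  classical
  intro m g s I sameBlock
  have hgdef : g = ∑ l ∈ Finset.Icc 1 k, 𝔟 l := rfl
  have hmdef : ∀ l, m l = ∑ t ∈ Finset.Ico 1 l, 𝔟 t := fun _ => rfl
  have hsdef : s = ∑ l ∈ Finset.Icc 1 k, c l := rfl
  have hm_step : ∀ l, 1 ≤ l → m (l + 1) = m l + 𝔟 l := by
    intro l hl
    rw [hmdef, hmdef, Finset.sum_Ico_succ_top hl]
  have hm_mono : ∀ {a b : ℕ}, a ≤ b → m a ≤ m b := by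
    intro a b hab
    rw [hmdef, hmdef]
    exact Finset.sum_le_sum_of_subset (Finset.Ico_subset_Ico le_rfl (by omega))
  have hIccIco : ∀ a b : ℕ, Finset.Icc a b = Finset.Ico a (b + 1) := by
    intro a b; ext x; simp only [Finset.mem_Icc, Finset.mem_Ico]; omega
  have hg : g = m (k + 1) := by
    rw [hgdef, hmdef, hIccIco]
  have hm1 : m 1 = 0 := by rw [hmdef]; simp
  have hm2 : m 2 = 𝔟 1 := by rw [show (2:ℕ) = 1 + 1 from rfl, hm_step 1 le_rfl, hm1, zero_add]
  have hcb : ∀ l, 1 ≤ l → l ≤ k → m l + c l ≤ m (l + 1) := by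
    intro l h1 h2
    rw [hm_step l h1]
    exact Nat.add_le_add_left (hc l (Finset.mem_Icc.mpr ⟨h1, h2⟩)) _
  have hIbig : ∀ i ∈ I, 𝔟 1 + 1 ≤ i ∧ i ≤ g := by
    rintro i ⟨l, h1, h2, h3, h4⟩
    constructor
    · have hl2 : 2 ≤ l := by
        by_contra h
        have hl1 : l = 1 := by omega
        subst hl1
        rw [hm1] at h3 h4
        omega
      have h5 := hm_mono hl2
      omega
    · have h5 := hcb l h1 h2
      have h6 := hm_mono (show l + 1 ≤ k + 1 by omega)
      omega
  have hsg : s ≤ g := by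
    rw [hsdef, hgdef]; exact Finset.sum_le_sum hc
  have h𝔟1g : 𝔟 1 ≤ g := by
    rw [hgdef]
    exact Finset.single_le_sum (f := 𝔟) (fun i _ => Nat.zero_le _)
      (Finset.mem_Icc.mpr ⟨le_rfl, hk⟩)
  set blkI : ℕ → Finset ℕ := fun l => Finset.Icc (m l + 1) (m l + c l) with hblkI
  have hdisj : ∀ l ∈ Finset.Icc 1 k, ∀ l' ∈ Finset.Icc 1 k, l ≠ l' →
      Disjoint (blkI l) (blkI l') := by
    intro l hl l' hl' hne
    simp only [Finset.mem_Icc] at hl hl'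
    rw [Finset.disjoint_left]
    intro x hx hx'
    simp only [hblkI, Finset.mem_Icc] at hx hx'
    rcases lt_or_gt_of_ne hne with h | h
    · have h5 := hcb l hl.1 hl.2
      have h6 := hm_mono (show l + 1 ≤ l' by omega)
      omega
    · have h5 := hcb l' hl'.1 hl'.2
      have h6 := hm_mono (show l' + 1 ≤ l by omega)
      omega
  set Ifin : Finset ℕ := (Finset.Icc 1 k).biUnion blkI with hIfin
  have hImemfin : ∀ i, i ∈ Ifin ↔ i ∈ I := by
    intro i
    simp only [hIfin, Finset.mem_biUnion, hblkI, Finset.mem_Icc, I, Set.mem_setOf_eq]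
    constructor
    · rintro ⟨l, ⟨h1, h2⟩, h3, h4⟩; exact ⟨l, h1, h2, h3, h4⟩
    · rintro ⟨l, h1, h2, h3, h4⟩; exact ⟨l, ⟨h1, h2⟩, h3, h4⟩
  have hIfincard : Ifin.card = s := by
    rw [hIfin, Finset.card_biUnion hdisj, hsdef]
    apply Finset.sum_congr rfl
    intro t _
    simp only [hblkI]
    rw [Nat.card_Icc]; omega
  set Sf : Finset ℕ := (Finset.Icc 1 g).filter (fun i => i ∉ I) with hSf
  have hIfinsub : Ifin ⊆ Finset.Icc 1 g := by
    intro i hi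
    have h := hIbig i ((hImemfin i).mp hi)
    simp only [Finset.mem_Icc]; omega
  have hSfeq : Sf = Finset.Icc 1 g \ Ifin := by
    ext i
    simp only [hSf, Finset.mem_filter, Finset.mem_sdiff, hImemfin]
  have hSfcard : Sf.card = g - s := by
    rw [hSfeq, Finset.card_sdiff_of_subset hIfinsub, hIfincard, Nat.card_Icc]
    omega
  -- the first set
  set Afin := ((Finset.Icc 1 g ×ˢ Finset.Icc 1 g).filter fun q =>
      q.1 ≤ q.2 ∧ q.1 ∉ I ∧ q.2 ∉ I ∧ ¬(q.1 ≤ 𝔟 1 ∧ q.2 ≤ 𝔟 1)) with hAfin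
  have hAset : {q : ℕ × ℕ | 1 ≤ q.1 ∧ q.1 ≤ q.2 ∧ q.2 ≤ g ∧ q.1 ∉ I ∧ q.2 ∉ I ∧
      ¬ (q.1 ≤ 𝔟 1 ∧ q.2 ≤ 𝔟 1)} = ↑Afin := by
    ext ⟨i, j⟩
    simp only [hAfin, Set.mem_setOf_eq, Finset.coe_filter, Finset.mem_product,
      Finset.mem_Icc, Set.mem_setOf_eq]
    constructor
    · rintro ⟨h1, h2, h3, h4⟩
      exact ⟨⟨⟨h1, h2.trans h3⟩, h1.trans h2, h3⟩, h2, h4⟩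
    · rintro ⟨⟨⟨h1, _⟩, _, h3⟩, h2, h4⟩
      exact ⟨h1, h2, h3, h4⟩
  set B1 := Finset.Icc 1 (𝔟 1) with hB1
  have hB1S : B1 ⊆ Sf := by
    intro x hx
    simp only [hB1, Finset.mem_Icc] at hx
    simp only [hSf, Finset.mem_filter, Finset.mem_Icc]
    refine ⟨⟨hx.1, hx.2.trans h𝔟1g⟩, fun hxI => ?_⟩
    have h := hIbig x hxI; omega
  set Tf := ((Sf ×ˢ Sf).filter fun q : ℕ × ℕ => q.1 ≤ q.2) with hTf
  set T1f := ((B1 ×ˢ B1).filter fun q : ℕ × ℕ => q.1 ≤ q.2) with hT1f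
  have hT1sub : T1f ⊆ Tf := by
    intro q hq
    simp only [hT1f, hTf, Finset.mem_filter, Finset.mem_product] at *
    exact ⟨⟨hB1S hq.1.1, hB1S hq.1.2⟩, hq.2⟩
  have hAeq : Afin = Tf \ T1f := by
    ext ⟨i, j⟩
    simp only [hAfin, hTf, hT1f, hSf, hB1, Finset.mem_filter, Finset.mem_sdiff,
      Finset.mem_product, Finset.mem_Icc]
    constructor
    · rintro ⟨⟨⟨hi1, hi2⟩, hj1, hj2⟩, hle, hiI, hjI, hno⟩
      exact ⟨⟨⟨⟨⟨hi1, hi2⟩, hiI⟩, ⟨hj1, hj2⟩, hjI⟩, hle⟩,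
        fun hbad => hno ⟨hbad.1.1.2, hbad.1.2.2⟩⟩
    · rintro ⟨⟨⟨⟨⟨hi1, hi2⟩, hiI⟩, ⟨hj1, hj2⟩, hjI⟩, hle⟩, hnot⟩
      exact ⟨⟨⟨hi1, hi2⟩, hj1, hj2⟩, hle, hiI, hjI,
        fun hbad => hnot ⟨⟨⟨hi1, hbad.1⟩, hj1, hbad.2⟩, hle⟩⟩
  have hT1le : T1f.card ≤ Tf.card := Finset.card_le_card hT1sub
  have hAcard : Afin.card = Tf.card - T1f.card := by
    rw [hAeq, Finset.card_sdiff_of_subset hT1sub]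
  have hT : 2 * Tf.card = (g - s) * (g - s + 1) := by
    rw [hTf, tri_count, hSfcard]
  have hB1card : B1.card = 𝔟 1 := by rw [hB1, Nat.card_Icc]; omega
  have hT1 : 2 * T1f.card = 𝔟 1 * (𝔟 1 + 1) := by
    rw [hT1f, tri_count, hB1card]
  -- the second set
  set Jf : ℕ → Finset ℕ := fun l => (Finset.Icc (m (l + 1) + 1) g).filter (fun j => j ∉ I)
    with hJf
  set Bfin := (Finset.Icc 1 k).biUnion (fun l => blkI l ×ˢ Jf l) with hBfin
  have hBset : {q : ℕ × ℕ | 1 ≤ q.1 ∧ q.1 < q.2 ∧ q.2 ≤ g ∧ q.1 ∈ I ∧ q.2 ∉ I ∧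
      ¬ sameBlock q.1 q.2} = ↑Bfin := by
    ext ⟨i, j⟩
    simp only [Set.mem_setOf_eq, Finset.mem_coe, hBfin, Finset.mem_biUnion,
      Finset.mem_product, hblkI, hJf, Finset.mem_filter, Finset.mem_Icc]
    constructor
    · rintro ⟨h1, h2, h3, hiI, hjI, hnsb⟩
      obtain ⟨l, hl1, hl2, hi1, hi2⟩ := hiI
      refine ⟨l, ⟨hl1, hl2⟩, ⟨hi1, hi2⟩, ⟨⟨?_, h3⟩, hjI⟩⟩
      by_contra hj
      push_neg at hj
      apply hnsb
      have hstep := hm_step l hl1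
      have hcl := hc l (Finset.mem_Icc.mpr ⟨hl1, hl2⟩)
      exact ⟨l, hl1, hl2, ⟨hi1, by omega⟩, ⟨by omega, by omega⟩⟩
    · rintro ⟨l, ⟨hl1, hl2⟩, ⟨hi1, hi2⟩, ⟨⟨hj1, hj2⟩, hjI⟩⟩
      have hstep := hm_step l hl1
      have hcl := hc l (Finset.mem_Icc.mpr ⟨hl1, hl2⟩)
      refine ⟨by omega, by omega, hj2, ⟨l, hl1, hl2, hi1, hi2⟩, hjI, ?_⟩
      rintro ⟨t, ht1, ht2, ⟨hit1, hit2⟩, ⟨hjt1, hjt2⟩⟩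
      have hstept := hm_step t ht1
      rcases lt_trichotomy t l with h | h | h
      · have h6 := hm_mono (show t + 1 ≤ l by omega); omega
      · subst h; omega
      · have h6 := hm_mono (show l + 1 ≤ t by omega); omega
  have hBdisj : ∀ l ∈ Finset.Icc 1 k, ∀ l' ∈ Finset.Icc 1 k, l ≠ l' →
      Disjoint (blkI l ×ˢ Jf l) (blkI l' ×ˢ Jf l') := by
    intro l hl l' hl' hne
    have hd := hdisj l hl l' hl' hne
    rw [Finset.disjoint_left] at hd ⊢
    intro q hq hq'
    rw [Finset.mem_product] at hq hq'
    exact hd hq.1 hq'.1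
  have hJcard : ∀ l, 1 ≤ l → l ≤ k →
      (Jf l).card = (∑ l' ∈ Finset.Icc (l + 1) k, 𝔟 l')
        - ∑ l' ∈ Finset.Icc (l + 1) k, c l' := by
    intro l hl1 hl2
    have hJeq : Jf l = Finset.Icc (m (l + 1) + 1) g \ (Finset.Icc (l + 1) k).biUnion blkI := by
      ext j
      simp only [hJf, Finset.mem_filter, Finset.mem_sdiff, Finset.mem_Icc,
        Finset.mem_biUnion, hblkI]
      constructor
      · rintro ⟨⟨hj1, hj2⟩, hjI⟩
        refine ⟨⟨hj1, hj2⟩, ?_⟩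
        rintro ⟨t, ⟨ht1, ht2⟩, hjt1, hjt2⟩
        exact hjI ⟨t, by omega, ht2, hjt1, hjt2⟩
      · rintro ⟨⟨hj1, hj2⟩, hno⟩
        refine ⟨⟨hj1, hj2⟩, ?_⟩
        rintro ⟨t, ht1, ht2, hjt1, hjt2⟩
        have htl : l + 1 ≤ t := by
          by_contra h
          have h5 := hcb t ht1 ht2
          have h6 := hm_mono (show t + 1 ≤ l + 1 by omega)
          omega
        exact hno ⟨t, ⟨htl, ht2⟩, hjt1, hjt2⟩
    have hsub : (Finset.Icc (l + 1) k).biUnion blkI ⊆ Finset.Icc (m (l + 1) + 1) g := by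
      intro j hj
      simp only [Finset.mem_biUnion, hblkI, Finset.mem_Icc] at hj ⊢
      obtain ⟨t, ⟨ht1, ht2⟩, hjt1, hjt2⟩ := hj
      have h5 := hcb t (by omega) ht2
      have h6 := hm_mono (show l + 1 ≤ t by omega)
      have h7 := hm_mono (show t + 1 ≤ k + 1 by omega)
      omega
    have hdisj' : ∀ a ∈ Finset.Icc (l + 1) k, ∀ b ∈ Finset.Icc (l + 1) k, a ≠ b →
        Disjoint (blkI a) (blkI b) := by
      intro a ha b hb hne
      simp only [Finset.mem_Icc] at ha hb
      exact hdisj a (Finset.mem_Icc.mpr ⟨by omega, ha.2⟩) b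
        (Finset.mem_Icc.mpr ⟨by omega, hb.2⟩) hne
    have hcards : ∑ t ∈ Finset.Icc (l + 1) k, (blkI t).card
        = ∑ t ∈ Finset.Icc (l + 1) k, c t := by
      apply Finset.sum_congr rfl
      intro t _
      simp only [hblkI]
      rw [Nat.card_Icc]; omega
    have hgdec : g = m (l + 1) + ∑ t ∈ Finset.Icc (l + 1) k, 𝔟 t := by
      rw [hgdef, hIccIco 1 k, ← Finset.sum_Ico_consecutive 𝔟 (show 1 ≤ l + 1 by omega)
        (show l + 1 ≤ k + 1 by omega), hmdef, hIccIco (l + 1) k]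
    have hcsle : ∑ t ∈ Finset.Icc (l + 1) k, c t ≤ ∑ t ∈ Finset.Icc (l + 1) k, 𝔟 t :=
      Finset.sum_le_sum (fun t ht => hc t (by
        simp only [Finset.mem_Icc] at ht ⊢; omega))
    rw [hJeq, Finset.card_sdiff_of_subset hsub, Finset.card_biUnion hdisj', hcards, Nat.card_Icc]
    omega
  have hBcard : Bfin.card = ∑ l ∈ Finset.Icc 1 k, c l * (Jf l).card := by
    rw [hBfin, Finset.card_biUnion hBdisj]
    apply Finset.sum_congr rfl
    intro l _
    rw [Finset.card_product]
    congr 1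
    simp only [hblkI]
    rw [Nat.card_Icc]; omega
  -- integer versions
  have h1 : ((g - s : ℕ) : ℤ) = (g : ℤ) - s := by
    rw [Nat.cast_sub hsg]
  have zT : 2 * (Tf.card : ℤ) = ((g : ℤ) - s) * (((g : ℤ) - s) + 1) := by
    rw [← h1]; exact_mod_cast hT
  have zT1 : 2 * (T1f.card : ℤ) = (𝔟 1 : ℤ) * ((𝔟 1 : ℤ) + 1) := by exact_mod_cast hT1
  have zAc : (Afin.card : ℤ) = (Tf.card : ℤ) - T1f.card := by
    rw [hAcard]; exact Nat.cast_sub hT1le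
  have zA : 2 * (Afin.card : ℤ)
      = ((g : ℤ) - s) * ((g : ℤ) + 1 - s) - (𝔟 1 : ℤ) * ((𝔟 1 : ℤ) + 1) := by
    rw [zAc]; rw [show ((g : ℤ) - s) * ((g : ℤ) + 1 - s)
      = ((g : ℤ) - s) * (((g : ℤ) - s) + 1) by ring]
    linarith [zT, zT1]
  have zB : (Bfin.card : ℤ) = ∑ l ∈ Finset.Icc 1 k,
      (c l : ℤ) * ((∑ l' ∈ Finset.Icc (l + 1) k, (𝔟 l' : ℤ))
        - ∑ l' ∈ Finset.Icc (l + 1) k, (c l' : ℤ)) := by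
    rw [hBcard]
    push_cast
    apply Finset.sum_congr rfl
    intro l hl
    simp only [Finset.mem_Icc] at hl
    congr 1
    rw [hJcard l hl.1 hl.2]
    have hcsle : ∑ t ∈ Finset.Icc (l + 1) k, c t ≤ ∑ t ∈ Finset.Icc (l + 1) k, 𝔟 t :=
      Finset.sum_le_sum (fun t ht => hc t (by
        simp only [Finset.mem_Icc] at ht ⊢; omega))
    push_cast [Nat.cast_sub hcsle]
    ring
  have zB2 : (Bfin.card : ℤ) =
      (∑ l ∈ Finset.Icc 2 k, ∑ l' ∈ Finset.Icc (l + 1) k, (c l : ℤ) * (𝔟 l' : ℤ))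
      - ∑ l ∈ Finset.Icc 1 k, ∑ l' ∈ Finset.Icc (l + 1) k, (c l : ℤ) * (c l' : ℤ) := by
    rw [zB]
    have e1 : ∀ l ∈ Finset.Icc 1 k,
        (c l : ℤ) * ((∑ l' ∈ Finset.Icc (l + 1) k, (𝔟 l' : ℤ))
          - ∑ l' ∈ Finset.Icc (l + 1) k, (c l' : ℤ))
        = (∑ l' ∈ Finset.Icc (l + 1) k, (c l : ℤ) * (𝔟 l' : ℤ))
          - ∑ l' ∈ Finset.Icc (l + 1) k, (c l : ℤ) * (c l' : ℤ) := by
      intro l _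
      rw [mul_sub, Finset.mul_sum, Finset.mul_sum]
    rw [Finset.sum_congr rfl e1, Finset.sum_sub_distrib]
    congr 1
    have hins : Finset.Icc 1 k = insert 1 (Finset.Icc 2 k) := by
      ext t; simp only [Finset.mem_Icc, Finset.mem_insert]; omega
    rw [hins, Finset.sum_insert (by simp [Finset.mem_Icc])]
    simp [hc1]
  rw [hAset, hBset, Set.ncard_coe_finset, Set.ncard_coe_finset]
  rw [zB2]
  have heven : Even ((𝔟 1 : ℤ) * ((𝔟 1 : ℤ) + 1)) := Int.even_mul_succ_self _
  obtain ⟨y, hy⟩ := heven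
  omega
end

section
/- Let p be a prime, g ≥ 1, 0 ≤ i ≤ g, and let A be a symmetric g×g matrix with entries in ℚ_p, written in block form A = [[u₁₁, u₁₂],[u₁₂ᵀ, u₂₂]] with u₁₁ of size (g−i)×(g−i) and u₂₂ of size i×i. Let F_i := diag(1_{g−i}, p·1_i, p·1_{g−i}, 1_i), u := [[1_g, A],[0, 1_g]] (block form with g×g blocks), and T_p := diag(1_g, p·1_g). Then F_i · u lies in the double coset GSp_{2g}(ℤ_p) · T_p · GSp_{2g}(ℤ_p) if and only if all entries of u₁₁ and u₁₂ lie in ℤ_p and all entries of p·u₂₂ lie in ℤ_p. -/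
open Matrix

section Aux
variable {p : ℕ} [Fact p.Prime]

lemma aux_mul_norm_le {n : Type*} [Fintype n] (X Y : Matrix n n ℚ_[p])
    (hX : ∀ a b, ‖X a b‖ ≤ 1) (hY : ∀ a b, ‖Y a b‖ ≤ 1) : ∀ a b, ‖(X * Y) a b‖ ≤ 1 := by
  intro a b
  rw [Matrix.mul_apply]
  refine IsUltrametricDist.norm_sum_le_of_forall_le_of_nonneg zero_le_one fun c _ => ?_
  rw [norm_mul]
  exact mul_le_one₀ (hX a c) (norm_nonneg _) (hY c b)

lemma aux_det_norm {n : Type*} [Fintype n] [DecidableEq n] (M Jm : Matrix n n ℚ_[p])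
    (hJ : Jm.det ≠ 0) (h : Mᵀ * Jm * M = Jm) : ‖M.det‖ = 1 := by
  have h2 := congrArg Matrix.det h
  rw [Matrix.det_mul, Matrix.det_mul, Matrix.det_transpose] at h2
  have h3 : M.det * M.det = 1 := by
    apply mul_right_cancel₀ hJ
    rw [one_mul]; linear_combination h2
  have h4 : ‖M.det‖ * ‖M.det‖ = 1 := by rw [← norm_mul, h3, norm_one]
  have h5 : (‖M.det‖ - 1) * (‖M.det‖ + 1) = 0 := by ring_nf; linarith
  rcases mul_eq_zero.mp h5 with h6 | h6
  · linarith
  · nlinarith [norm_nonneg M.det]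
lemma aux_fb_neg_one {l m α : Type*} [DecidableEq l] [DecidableEq m] [NonAssocRing α] :
    Matrix.fromBlocks (-1 : Matrix l l α) 0 0 (-1 : Matrix m m α) = -1 := by
  rw [← Matrix.fromBlocks_one (l := l) (m := m), Matrix.fromBlocks_neg]; simp

lemma aux_one_entry {n : Type*} [DecidableEq n] (a b : n) :
    ‖(1 : Matrix n n ℚ_[p]) a b‖ ≤ 1 := by
  rw [Matrix.one_apply]
  split_ifs <;> simp

end Aux

theorem stmt_12 (p : ℕ) [Fact p.Prime] (g i : ℕ) (hg : 1 ≤ g) (hig : i ≤ g)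
    (u11 : Matrix (Fin (g - i)) (Fin (g - i)) ℚ_[p])
    (u12 : Matrix (Fin (g - i)) (Fin i) ℚ_[p])
    (u22 : Matrix (Fin i) (Fin i) ℚ_[p])
    (h11 : u11.IsSymm) (h22 : u22.IsSymm) :
    let J : Matrix ((Fin (g - i) ⊕ Fin i) ⊕ (Fin (g - i) ⊕ Fin i))
        ((Fin (g - i) ⊕ Fin i) ⊕ (Fin (g - i) ⊕ Fin i)) ℚ_[p] :=
      Matrix.fromBlocks 0 1 (-1) 0
    let GSp : Matrix ((Fin (g - i) ⊕ Fin i) ⊕ (Fin (g - i) ⊕ Fin i))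
        ((Fin (g - i) ⊕ Fin i) ⊕ (Fin (g - i) ⊕ Fin i)) ℚ_[p] → Prop := fun M =>
      (∀ a b, ‖M a b‖ ≤ 1) ∧ ‖M.det‖ = 1 ∧
        ∃ lam : ℚ_[p], ‖lam‖ = 1 ∧ Mᵀ * J * M = lam • J
    let A : Matrix (Fin (g - i) ⊕ Fin i) (Fin (g - i) ⊕ Fin i) ℚ_[p] :=
      Matrix.fromBlocks u11 u12 u12ᵀ u22
    let F : Matrix ((Fin (g - i) ⊕ Fin i) ⊕ (Fin (g - i) ⊕ Fin i))
        ((Fin (g - i) ⊕ Fin i) ⊕ (Fin (g - i) ⊕ Fin i)) ℚ_[p] :=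
      Matrix.diagonal (Sum.elim
        (Sum.elim (fun _ => 1) (fun _ => (p : ℚ_[p])))
        (Sum.elim (fun _ => (p : ℚ_[p])) (fun _ => 1)))
    let u : Matrix ((Fin (g - i) ⊕ Fin i) ⊕ (Fin (g - i) ⊕ Fin i))
        ((Fin (g - i) ⊕ Fin i) ⊕ (Fin (g - i) ⊕ Fin i)) ℚ_[p] :=
      Matrix.fromBlocks 1 A 0 1
    let Tp : Matrix ((Fin (g - i) ⊕ Fin i) ⊕ (Fin (g - i) ⊕ Fin i))
        ((Fin (g - i) ⊕ Fin i) ⊕ (Fin (g - i) ⊕ Fin i)) ℚ_[p] :=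
      Matrix.fromBlocks 1 0 0 ((p : ℚ_[p]) • 1)
    ((∃ k₁ k₂, GSp k₁ ∧ GSp k₂ ∧ F * u = k₁ * Tp * k₂) ↔
      ((∀ a b, ‖u11 a b‖ ≤ 1) ∧ (∀ a b, ‖u12 a b‖ ≤ 1) ∧
        (∀ a b, ‖(p : ℚ_[p]) * u22 a b‖ ≤ 1))) := by
  intro J GSp A F u Tp
  have hple : ‖(p : ℚ_[p])‖ ≤ 1 := le_of_lt Padic.norm_p_lt_one
  have hpinv : ((p : ℝ))⁻¹ ≤ 1 :=
    inv_le_one_of_one_le₀ (by exact_mod_cast (Fact.out : p.Prime).one_lt.le)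
  constructor
  · rintro ⟨k₁, k₂, ⟨hk₁, -, -⟩, ⟨hk₂, -, -⟩, heq⟩
    have hTp : ∀ a b, ‖Tp a b‖ ≤ 1 := by
      intro a b
      rcases a with a | a <;> rcases b with b | b <;>
        simp [Tp, Matrix.one_apply] <;> split_ifs <;>
        simp [hpinv]
    have hM : ∀ a b, ‖(F * u) a b‖ ≤ 1 := by
      rw [heq]
      exact aux_mul_norm_le _ _ (aux_mul_norm_le _ _ hk₁ hTp) hk₂
    refine ⟨fun a b => ?_, fun a b => ?_, fun a b => ?_⟩
    · have := hM (Sum.inl (Sum.inl a)) (Sum.inr (Sum.inl b))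
      simpa [F, u, A, Matrix.diagonal_mul] using this
    · have := hM (Sum.inl (Sum.inl a)) (Sum.inr (Sum.inr b))
      simpa [F, u, A, Matrix.diagonal_mul] using this
    · have := hM (Sum.inl (Sum.inr a)) (Sum.inr (Sum.inr b))
      simpa [F, u, A, Matrix.diagonal_mul] using this
  · rintro ⟨H11, H12, H22⟩
    set c : Matrix (Fin i) (Fin i) ℚ_[p] := (p : ℚ_[p]) • u22 with hc_def
    have hc : cᵀ = c := by rw [hc_def, Matrix.transpose_smul, h22]
    set k₁ : Matrix ((Fin (g - i) ⊕ Fin i) ⊕ (Fin (g - i) ⊕ Fin i))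
        ((Fin (g - i) ⊕ Fin i) ⊕ (Fin (g - i) ⊕ Fin i)) ℚ_[p] :=
      Matrix.fromBlocks (Matrix.fromBlocks 1 0 0 (-c)) (Matrix.fromBlocks 0 0 0 1)
        (Matrix.fromBlocks 0 0 0 (-1)) (Matrix.fromBlocks 1 0 0 0) with hk1_def
    set k₂ : Matrix ((Fin (g - i) ⊕ Fin i) ⊕ (Fin (g - i) ⊕ Fin i))
        ((Fin (g - i) ⊕ Fin i) ⊕ (Fin (g - i) ⊕ Fin i)) ℚ_[p] :=
      Matrix.fromBlocks (Matrix.fromBlocks 1 0 0 0) (Matrix.fromBlocks u11 u12 0 (-1))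
        (Matrix.fromBlocks 0 0 0 1) (Matrix.fromBlocks 1 0 u12ᵀ 0) with hk2_def
    have hJdet : J.det ≠ 0 := by
      have hJJ : J * (-J) = 1 := by
        simp [J, Matrix.fromBlocks_neg, Matrix.fromBlocks_multiply, Matrix.fromBlocks_one,
          aux_fb_neg_one]
      have := congrArg Matrix.det hJJ
      rw [Matrix.det_mul, Matrix.det_one] at this
      intro h0
      rw [h0, zero_mul] at this
      exact zero_ne_one this
    have hs1 : k₁ᵀ * J * k₁ = J := by
      simp [hk1_def, J, Matrix.fromBlocks_transpose, Matrix.fromBlocks_multiply,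
        Matrix.fromBlocks_neg, Matrix.transpose_neg, hc, Matrix.fromBlocks_add,
        Matrix.fromBlocks_one, aux_fb_neg_one]
    have hs2 : k₂ᵀ * J * k₂ = J := by
      simp [hk2_def, J, Matrix.fromBlocks_transpose, Matrix.fromBlocks_multiply,
        Matrix.fromBlocks_neg, Matrix.transpose_neg, h11.eq, Matrix.fromBlocks_add,
        Matrix.fromBlocks_one, aux_fb_neg_one]
    have hcent : ∀ a b, ‖c a b‖ ≤ 1 := by
      intro a b
      simpa [hc_def, Matrix.smul_apply, smul_eq_mul] using H22 a b
    have hent1 : ∀ a b, ‖k₁ a b‖ ≤ 1 := by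
      intro a b
      rcases a with a | a <;> rcases b with b | b <;>
        rcases a with a | a <;> rcases b with b | b <;>
        simp only [hk1_def, Matrix.fromBlocks_apply₁₁, Matrix.fromBlocks_apply₁₂,
          Matrix.fromBlocks_apply₂₁, Matrix.fromBlocks_apply₂₂, Matrix.neg_apply,
          Matrix.zero_apply, norm_neg, norm_zero] <;>
        first
          | exact zero_le_one
          | exact aux_one_entry a b
          | exact hcent a b
    have hent2 : ∀ a b, ‖k₂ a b‖ ≤ 1 := by
      intro a b
      rcases a with a | a <;> rcases b with b | b <;>
        rcases a with a | a <;> rcases b with b | b <;>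
        simp only [hk2_def, Matrix.fromBlocks_apply₁₁, Matrix.fromBlocks_apply₁₂,
          Matrix.fromBlocks_apply₂₁, Matrix.fromBlocks_apply₂₂, Matrix.neg_apply,
          Matrix.zero_apply, Matrix.transpose_apply, norm_neg, norm_zero] <;>
        first
          | exact zero_le_one
          | exact aux_one_entry a b
          | exact H11 a b
          | exact H12 a b
          | exact H12 b a
    refine ⟨k₁, k₂, ⟨hent1, aux_det_norm _ _ hJdet hs1, 1, norm_one, by rw [one_smul, hs1]⟩,
      ⟨hent2, aux_det_norm _ _ hJdet hs2, 1, norm_one, by rw [one_smul, hs2]⟩, ?_⟩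
    have hF : F = Matrix.fromBlocks
        (Matrix.fromBlocks 1 0 0 ((p : ℚ_[p]) • 1)) 0 0
        (Matrix.fromBlocks ((p : ℚ_[p]) • 1) 0 0 1) := by
      show Matrix.diagonal _ = _
      rw [← Matrix.fromBlocks_diagonal, ← Matrix.fromBlocks_diagonal,
        ← Matrix.fromBlocks_diagonal]
      simp [Matrix.diagonal_one, Matrix.smul_one_eq_diagonal]
    rw [hF]
    show _ = k₁ * Tp * k₂
    rw [hk1_def, hk2_def]
    simp only [u, A, Tp, hc_def]
    simp [Matrix.fromBlocks_multiply, Matrix.fromBlocks_add, Matrix.fromBlocks_smul,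
      Matrix.mul_smul, Matrix.smul_mul, smul_smul, Matrix.fromBlocks_one]
end

section
/- Let g ≥ 1 and let 𝔟_1,…,𝔟_k ≥ 1 be integers with g = 𝔟_1+⋯+𝔟_k; set m_l = 𝔟_1+⋯+𝔟_{l−1}. Let W = (ℤ/2ℤ)^g ⋊ S_g be the hyperoctahedral group, where S_g acts by permuting coordinates. Let H ≤ W be the Young subgroup S_{𝔟_1} × ⋯ × S_{𝔟_k} ⊆ S_g (permutations preserving each block {m_l+1,…,m_l+𝔟_l}, with trivial sign component), and let X ≤ W be the subgroup generated by S_g together with the central element δ = (1,1,…,1) ∈ (ℤ/2ℤ)^g (the all-sign-flip element). For a tuple c = (c_1,…,c_k) with 0 ≤ c_l ≤ 𝔟_l, let w(c) ∈ (ℤ/2ℤ)^g ⊂ W be the element whose l-th block has entry 0 in its first c_l positions and entry 1 in its last 𝔟_l − c_l positions. Then the assignment c ↦ H·w(c)·X induces a bijection from the set of tuples {(c_1,…,c_k) : 0 ≤ c_l ≤ 𝔟_l} modulo the equivalence (c_1,…,c_k) ∼ (𝔟_1−c_1,…,𝔟_k−c_k) onto the set of double cosets H∖W/X. -/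
open scoped Classical

/-- The sign part `(ℤ/2ℤ)^g` of the hyperoctahedral group, written multiplicatively. -/
abbrev SgnVec (g : ℕ) := Fin g → Multiplicative (ZMod 2)

/-- The action of `S_g` on `(ℤ/2ℤ)^g` by permuting coordinates, as a homomorphism to
the automorphism group. -/
def permAction (g : ℕ) : Equiv.Perm (Fin g) →* MulAut (SgnVec g) where
  toFun σ := MulEquiv.arrowCongr σ (MulEquiv.refl (Multiplicative (ZMod 2)))
  map_one' := rfl
  map_mul' _ _ := rfl

/-- The hyperoctahedral group `W = (ℤ/2ℤ)^g ⋊ S_g`. -/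
abbrev HyperOct (g : ℕ) := SgnVec g ⋊[permAction g] Equiv.Perm (Fin g)

/-- partial sums of block sizes -/
def mfun (𝔟 : ℕ → ℕ) (l : ℕ) : ℕ := ∑ t ∈ Finset.Ico 1 l, 𝔟 t

/-- the block index of a position `i` -/
noncomputable def blkfun (k : ℕ) (𝔟 : ℕ → ℕ) (i : ℕ) : ℕ :=
  Nat.findGreatest (fun l => mfun 𝔟 l ≤ i) k

lemma mfun_one (𝔟 : ℕ → ℕ) : mfun 𝔟 1 = 0 := by simp [mfun]

lemma mfun_succ (𝔟 : ℕ → ℕ) {l : ℕ} (hl : 1 ≤ l) : mfun 𝔟 (l + 1) = mfun 𝔟 l + 𝔟 l :=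
  Finset.sum_Ico_succ_top hl _

lemma mfun_mono (𝔟 : ℕ → ℕ) {l l' : ℕ} (h : l ≤ l') : mfun 𝔟 l ≤ mfun 𝔟 l' :=
  Finset.sum_le_sum_of_subset (Finset.Ico_subset_Ico le_rfl h)

lemma mfun_block_le (𝔟 : ℕ → ℕ) {l l' : ℕ} (hl : 1 ≤ l) (h : l < l') :
    mfun 𝔟 l + 𝔟 l ≤ mfun 𝔟 l' := by
  rw [← mfun_succ 𝔟 hl]; exact mfun_mono 𝔟 h

lemma blk_spec (k : ℕ) (𝔟 : ℕ → ℕ) (hk : 1 ≤ k) {i : ℕ} (hi : i < mfun 𝔟 (k + 1)) :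
    1 ≤ blkfun k 𝔟 i ∧ blkfun k 𝔟 i ≤ k ∧ mfun 𝔟 (blkfun k 𝔟 i) ≤ i ∧
      i < mfun 𝔟 (blkfun k 𝔟 i) + 𝔟 (blkfun k 𝔟 i) := by
  have hP1 : mfun 𝔟 1 ≤ i := by simp [mfun_one]
  have h1 : 1 ≤ blkfun k 𝔟 i :=
    Nat.le_findGreatest (P := fun l => mfun 𝔟 l ≤ i) hk hP1
  have h2 : blkfun k 𝔟 i ≤ k := Nat.findGreatest_le (P := fun l => mfun 𝔟 l ≤ i) k
  have h3 : mfun 𝔟 (blkfun k 𝔟 i) ≤ i :=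
    Nat.findGreatest_spec (P := fun l => mfun 𝔟 l ≤ i) (m := 1) hk hP1
  refine ⟨h1, h2, h3, ?_⟩
  rcases eq_or_lt_of_le h2 with he | hlt
  · have := mfun_succ 𝔟 hk
    rw [he]
    omega
  · have hgt : ¬ mfun 𝔟 (blkfun k 𝔟 i + 1) ≤ i :=
      Nat.findGreatest_is_greatest (P := fun l => mfun 𝔟 l ≤ i) (n := k)
        (Nat.lt_succ_self _) hlt
    rw [mfun_succ 𝔟 h1] at hgt
    omega

lemma blk_eq (k : ℕ) (𝔟 : ℕ → ℕ) (hk : 1 ≤ k) {i l : ℕ} (hi : i < mfun 𝔟 (k + 1))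
    (hl1 : 1 ≤ l) (hlk : l ≤ k) (h1 : mfun 𝔟 l ≤ i) (h2 : i < mfun 𝔟 l + 𝔟 l) :
    blkfun k 𝔟 i = l := by
  obtain ⟨b1, b2, b3, b4⟩ := blk_spec k 𝔟 hk hi
  rcases lt_trichotomy (blkfun k 𝔟 i) l with h | h | h
  · have := mfun_block_le 𝔟 b1 h
    omega
  · exact h
  · have := mfun_block_le 𝔟 hl1 h
    omega

lemma card_filter_Fin (g a b : ℕ) (hb : b ≤ g) :
    (Finset.univ.filter fun i : Fin g => a ≤ (i : ℕ) ∧ (i : ℕ) < b).card = b - a := by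
  rcases Nat.eq_zero_or_pos g with hg | hg
  · subst hg
    simp
    omega
  · rw [← Nat.card_Ico a b]
    apply Finset.card_nbij' (i := fun i : Fin g => (i : ℕ))
      (j := fun j => ⟨j % g, Nat.mod_lt _ hg⟩)
    · intro x hx
      simp only [Finset.mem_coe, Finset.mem_filter, Finset.mem_univ, true_and] at hx
      simp [Finset.mem_Ico, hx.1, hx.2]
    · intro j hj
      simp only [Finset.mem_coe, Finset.mem_Ico] at hj
      have : j % g = j := Nat.mod_eq_of_lt (lt_of_lt_of_le hj.2 hb)
      simp [this, hj.1, hj.2]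
    · intro x hx
      apply Fin.ext
      simp [Nat.mod_eq_of_lt x.2]
    · intro j hj
      simp only [Finset.mem_coe, Finset.mem_Ico] at hj
      simp [Nat.mod_eq_of_lt (lt_of_lt_of_le hj.2 hb)]

lemma exists_perm_comp {α β : Type*} [Fintype α] [DecidableEq β] (f f' : α → β)
    (h : ∀ b, (Finset.univ.filter fun a => f a = b).card =
      (Finset.univ.filter fun a => f' a = b).card) :
    ∃ τ : Equiv.Perm α, ∀ a, f (τ a) = f' a := by
  classical
  have e : ∀ b, { a // f' a = b } ≃ { a // f a = b } := fun b =>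
    Fintype.equivOfCardEq (by
      simp only [Fintype.card_subtype]
      exact (h b).symm)
  exact ⟨Equiv.ofFiberEquiv e, fun a => Equiv.ofFiberEquiv_map e a⟩

theorem stmt_15 (g k : ℕ) (hg : 1 ≤ g) (hk : 1 ≤ k) (𝔟 : ℕ → ℕ)
    (h𝔟 : ∀ l ∈ Finset.Icc 1 k, 1 ≤ 𝔟 l) (hsum : ∑ l ∈ Finset.Icc 1 k, 𝔟 l = g) :
    let m : ℕ → ℕ := fun l => ∑ t ∈ Finset.Ico 1 l, 𝔟 t
    let δ : SgnVec g := fun _ => Multiplicative.ofAdd (1 : ZMod 2)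
    -- the Young subgroup `S_{𝔟_1} × ⋯ × S_{𝔟_k}` (trivial sign component,
    -- permutation preserving each block)
    let H : Set (HyperOct g) := {w | w.left = 1 ∧ ∀ l ∈ Finset.Icc 1 k, ∀ i : Fin g,
      (m l ≤ (i : ℕ) ∧ (i : ℕ) < m l + 𝔟 l) →
        (m l ≤ (w.right i : ℕ) ∧ (w.right i : ℕ) < m l + 𝔟 l)}
    -- the subgroup generated by `S_g` and the all-sign-flip element `δ`
    let X : Set (HyperOct g) :=
      (Subgroup.closure ({w : HyperOct g | w.left = 1} ∪ {⟨δ, 1⟩}) : Subgroup (HyperOct g))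
    -- the element `w(c)`
    let wc : (ℕ → ℕ) → HyperOct g := fun c =>
      ⟨fun i => if ∃ l, 1 ≤ l ∧ l ≤ k ∧ m l ≤ (i : ℕ) ∧ (i : ℕ) < m l + c l then 1
        else Multiplicative.ofAdd (1 : ZMod 2), 1⟩
    -- the induced map to the double coset space `H \ W / X`
    let F : (ℕ → ℕ) → DoubleCoset.Quotient H X := fun c => Quotient.mk'' (wc c)
    -- surjectivity
    (∀ q : DoubleCoset.Quotient H X, ∃ c, (∀ l ∈ Finset.Icc 1 k, c l ≤ 𝔟 l) ∧ F c = q) ∧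
    -- the fibers are exactly the equivalence classes of `(c_l) ∼ (𝔟_l - c_l)`
    (∀ c c', (∀ l ∈ Finset.Icc 1 k, c l ≤ 𝔟 l) → (∀ l ∈ Finset.Icc 1 k, c' l ≤ 𝔟 l) →
      (F c = F c' ↔ ((∀ l ∈ Finset.Icc 1 k, c l = c' l) ∨
        (∀ l ∈ Finset.Icc 1 k, c l + c' l = 𝔟 l)))) := by
  classical
  intro m δ H X wc F
  -- decidable facts about `Multiplicative (ZMod 2)`
  have hmem2 : ∀ v : Multiplicative (ZMod 2), v = 1 ∨ v = Multiplicative.ofAdd (1 : ZMod 2) := by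
    decide
  have htne : ¬ ((Multiplicative.ofAdd (1 : ZMod 2)) = 1) := by decide
  have hone : ∀ v : Multiplicative (ZMod 2),
      (v * Multiplicative.ofAdd (1 : ZMod 2) = 1 ↔ ¬ v = 1) := by decide
  have hvt : ∀ v : Multiplicative (ZMod 2),
      (v = Multiplicative.ofAdd (1 : ZMod 2) ↔ ¬ v = 1) := by decide
  -- facts about δ
  have hδperm : ∀ σ : Equiv.Perm (Fin g), (permAction g σ) δ = δ := fun σ => rfl
  have hδperm' : ∀ σ : Equiv.Perm (Fin g), ((permAction g σ))⁻¹ δ = δ := fun σ => rfl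
  have hδδ : δ * δ = 1 := by
    funext i
    exact (by decide :
      Multiplicative.ofAdd (1 : ZMod 2) * Multiplicative.ofAdd (1 : ZMod 2) = 1)
  have hδinv : δ⁻¹ = δ := by
    funext i
    exact (by decide :
      (Multiplicative.ofAdd (1 : ZMod 2))⁻¹ = Multiplicative.ofAdd (1 : ZMod 2))
  -- the block function
  set B : Fin g → ℕ := fun i => blkfun k 𝔟 (i : ℕ) with hBdef
  have hg' : m (k + 1) = g := by
    show mfun 𝔟 (k + 1) = g
    rw [mfun, Finset.Ico_add_one_right_eq_Icc]
    exact hsum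
  have hiK : ∀ i : Fin g, (i : ℕ) < mfun 𝔟 (k + 1) := fun i => by
    have := i.2; have hh : mfun 𝔟 (k+1) = g := hg'; omega
  have hBs : ∀ i : Fin g, 1 ≤ B i ∧ B i ≤ k ∧ m (B i) ≤ (i : ℕ) ∧
      (i : ℕ) < m (B i) + 𝔟 (B i) := fun i => blk_spec k 𝔟 hk (hiK i)
  have hBeq : ∀ (i : Fin g) (l : ℕ), 1 ≤ l → l ≤ k → m l ≤ (i : ℕ) →
      (i : ℕ) < m l + 𝔟 l → B i = l :=
    fun i l h1 h2 h3 h4 => blk_eq k 𝔟 hk (hiK i) h1 h2 h3 h4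
  have hmg : ∀ l, 1 ≤ l → l ≤ k → m l + 𝔟 l ≤ g := by
    intro l h1 h2
    have h3 : m l + 𝔟 l ≤ m (k + 1) := mfun_block_le 𝔟 h1 (by omega)
    omega
  -- basic facts about `wc`
  have hwcl : ∀ (c : ℕ → ℕ), (wc c).left = fun i : Fin g =>
      if ∃ l, 1 ≤ l ∧ l ≤ k ∧ m l ≤ (i : ℕ) ∧ (i : ℕ) < m l + c l then 1
      else Multiplicative.ofAdd (1 : ZMod 2) := fun c => rfl
  have hwcr : ∀ c, (wc c).right = 1 := fun c => rfl
  have hcond : ∀ (c : ℕ → ℕ), (∀ l ∈ Finset.Icc 1 k, c l ≤ 𝔟 l) → ∀ i : Fin g,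
      ((∃ l, 1 ≤ l ∧ l ≤ k ∧ m l ≤ (i : ℕ) ∧ (i : ℕ) < m l + c l) ↔
        (i : ℕ) < m (B i) + c (B i)) := by
    intro c hc i
    constructor
    · rintro ⟨l, h1, h2, h3, h4⟩
      have hcb : c l ≤ 𝔟 l := hc l (Finset.mem_Icc.mpr ⟨h1, h2⟩)
      have hBi : B i = l := hBeq i l h1 h2 h3 (by omega)
      rw [hBi]; exact h4
    · intro h
      exact ⟨B i, (hBs i).1, (hBs i).2.1, (hBs i).2.2.1, h⟩
  have hwc1 : ∀ (c : ℕ → ℕ), (∀ l ∈ Finset.Icc 1 k, c l ≤ 𝔟 l) → ∀ i : Fin g,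
      ((wc c).left i = 1 ↔ (i : ℕ) < m (B i) + c (B i)) := by
    intro c hc i
    show (if ∃ l, 1 ≤ l ∧ l ≤ k ∧ m l ≤ (i : ℕ) ∧ (i : ℕ) < m l + c l then 1
      else Multiplicative.ofAdd (1 : ZMod 2)) = 1 ↔ (i : ℕ) < m (B i) + c (B i)
    by_cases h : (i : ℕ) < m (B i) + c (B i)
    · rw [if_pos ((hcond c hc i).mpr h)]
      simp [h]
    · rw [if_neg (fun hp => h ((hcond c hc i).mp hp))]
      simp [h, htne]
  -- counting lemmas
  have cB : ∀ l, 1 ≤ l → l ≤ k →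
      (Finset.univ.filter fun i : Fin g => B i = l).card = 𝔟 l := by
    intro l h1 h2
    have hfe : (Finset.univ.filter fun i : Fin g => B i = l)
        = Finset.univ.filter fun i : Fin g => m l ≤ (i : ℕ) ∧ (i : ℕ) < m l + 𝔟 l := by
      ext i
      simp only [Finset.mem_filter, Finset.mem_univ, true_and]
      constructor
      · intro hBi
        have h3 := (hBs i).2.2.1
        have h4 := (hBs i).2.2.2
        rw [hBi] at h3 h4
        exact ⟨h3, h4⟩
      · rintro ⟨h3, h4⟩
        exact hBeq i l h1 h2 h3 h4
    rw [hfe, card_filter_Fin g (m l) (m l + 𝔟 l) (hmg l h1 h2)]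
    omega
  have cA : ∀ (c : ℕ → ℕ), (∀ l ∈ Finset.Icc 1 k, c l ≤ 𝔟 l) → ∀ l, 1 ≤ l → l ≤ k →
      (Finset.univ.filter fun i : Fin g => B i = l ∧ (wc c).left i = 1).card = c l := by
    intro c hc l h1 h2
    have hcb : c l ≤ 𝔟 l := hc l (Finset.mem_Icc.mpr ⟨h1, h2⟩)
    have hfe : (Finset.univ.filter fun i : Fin g => B i = l ∧ (wc c).left i = 1)
        = Finset.univ.filter fun i : Fin g => m l ≤ (i : ℕ) ∧ (i : ℕ) < m l + c l := by
      ext i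
      simp only [Finset.mem_filter, Finset.mem_univ, true_and]
      rw [hwc1 c hc i]
      constructor
      · rintro ⟨hBi, hlt⟩
        have h3 := (hBs i).2.2.1
        rw [hBi] at h3 hlt
        exact ⟨h3, hlt⟩
      · rintro ⟨hml, hlt⟩
        have hBi : B i = l := hBeq i l h1 h2 hml (by omega)
        rw [hBi]
        exact ⟨rfl, hlt⟩
    rw [hfe, card_filter_Fin g (m l) (m l + c l) (by have := hmg l h1 h2; omega)]
    omega
  have cC : ∀ (f : SgnVec g) (l : ℕ), 1 ≤ l → l ≤ k →
      (Finset.univ.filter fun i : Fin g => B i = l ∧ f i = 1).card +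
        (Finset.univ.filter fun i : Fin g => B i = l ∧ ¬ (f i = 1)).card = 𝔟 l := by
    intro f l h1 h2
    rw [← cB l h1 h2, ← Finset.filter_filter, ← Finset.filter_filter]
    exact Finset.card_filter_add_card_filter_not (fun i => f i = 1)
  have cP : ∀ (τ : Equiv.Perm (Fin g)), (∀ i, B (τ i) = B i) →
      ∀ (p : Fin g → Prop) (_ : DecidablePred p) (l : ℕ),
      (Finset.univ.filter fun i : Fin g => B i = l ∧ p (τ i)).card =
        (Finset.univ.filter fun i : Fin g => B i = l ∧ p i).card := by
    intro τ hτ p _hp l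
    have hτ' : ∀ i, B (τ⁻¹ i) = B i := fun i => by
      have := hτ (τ⁻¹ i)
      rw [Equiv.Perm.coe_inv, Equiv.apply_symm_apply] at this
      exact this.symm
    apply Finset.card_nbij' (i := fun i => τ i) (j := fun j => τ⁻¹ j)
    · intro a ha
      simp only [Finset.mem_coe, Finset.mem_filter, Finset.mem_univ, true_and] at ha ⊢
      exact ⟨(hτ a).trans ha.1, ha.2⟩
    · intro b hb
      simp only [Finset.mem_coe, Finset.mem_filter, Finset.mem_univ, true_and] at hb ⊢
      refine ⟨(hτ' b).trans hb.1, ?_⟩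
      rw [Equiv.Perm.coe_inv, Equiv.apply_symm_apply]
      exact hb.2
    · intro a _
      simp
    · intro b _
      simp
  have hinvB : ∀ τ : Equiv.Perm (Fin g), (∀ i, B (τ i) = B i) → ∀ i, B (τ⁻¹ i) = B i := by
    intro τ hτ i
    have := hτ (τ⁻¹ i)
    rw [Equiv.Perm.coe_inv, Equiv.apply_symm_apply] at this
    exact this.symm
  -- membership in H, rephrased through B
  have hHmem : ∀ w : HyperOct g, w ∈ H ↔ (w.left = 1 ∧ ∀ i, B (w.right i) = B i) := by
    intro w
    constructor
    · intro hw
      have hw' : w.left = 1 ∧ ∀ l ∈ Finset.Icc 1 k, ∀ i : Fin g,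
          (m l ≤ (i : ℕ) ∧ (i : ℕ) < m l + 𝔟 l) →
            (m l ≤ (w.right i : ℕ) ∧ (w.right i : ℕ) < m l + 𝔟 l) := hw
      refine ⟨hw'.1, fun i => ?_⟩
      obtain ⟨b1, b2, b3, b4⟩ := hBs i
      have := hw'.2 (B i) (Finset.mem_Icc.mpr ⟨b1, b2⟩) i ⟨b3, b4⟩
      exact hBeq (w.right i) (B i) b1 b2 this.1 this.2
    · rintro ⟨h1, h2⟩
      refine ⟨h1, fun l hl i hi => ?_⟩
      rw [Finset.mem_Icc] at hl
      have hBi : B i = l := hBeq i l hl.1 hl.2 hi.1 hi.2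
      have h3 := hBs (w.right i)
      rw [h2 i, hBi] at h3
      exact ⟨h3.2.2.1, h3.2.2.2⟩
  -- `H` is a subgroup
  let HS : Subgroup (HyperOct g) :=
    { carrier := H
      one_mem' := by
        refine (hHmem 1).mpr ⟨rfl, fun i => rfl⟩
      mul_mem' := by
        intro a b ha hb
        obtain ⟨ha1, ha2⟩ := (hHmem a).mp ha
        obtain ⟨hb1, hb2⟩ := (hHmem b).mp hb
        refine (hHmem (a * b)).mpr ⟨?_, fun i => ?_⟩
        · rw [SemidirectProduct.mul_left, ha1, hb1, one_mul, map_one]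
        · show B (a.right (b.right i)) = B i
          rw [ha2 (b.right i), hb2 i]
      inv_mem' := by
        intro a ha
        obtain ⟨ha1, ha2⟩ := (hHmem a).mp ha
        refine (hHmem a⁻¹).mpr ⟨?_, fun i => ?_⟩
        · rw [SemidirectProduct.inv_left, ha1, inv_one, map_one]
        · show B (a.right⁻¹ i) = B i
          exact hinvB a.right ha2 i }
  let XS : Subgroup (HyperOct g) :=
    Subgroup.closure ({w : HyperOct g | w.left = 1} ∪ {⟨δ, 1⟩})
  have hFiff : ∀ a b : HyperOct g,
      ((Quotient.mk'' a : DoubleCoset.Quotient H X) = Quotient.mk'' b) ↔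
        ∃ h ∈ HS, ∃ x ∈ XS, b = h * a * x := fun a b => DoubleCoset.eq HS XS a b
  -- membership in XS
  have hXchar : ∀ x : HyperOct g, x ∈ XS → x.left = 1 ∨ x.left = δ := by
    intro x hx
    refine Subgroup.closure_induction
      (p := fun y _ => y.left = 1 ∨ y.left = δ) ?_ ?_ ?_ ?_ hx
    · rintro y (hy | hy)
      · exact Or.inl hy
      · right
        rw [show y = (⟨δ, 1⟩ : HyperOct g) from hy]
    · exact Or.inl rfl
    · rintro y z _ _ (hy | hy) (hz | hz) <;>
        rw [SemidirectProduct.mul_left, hy, hz] <;> simp [hδperm, hδδ]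
    · rintro y _ (hy | hy) <;> rw [SemidirectProduct.inv_left, hy] <;>
        simp [hδinv, hδperm, hδperm']
  have hXσ : ∀ σ : Equiv.Perm (Fin g), (⟨1, σ⟩ : HyperOct g) ∈ XS :=
    fun σ => Subgroup.subset_closure (Set.mem_union_left _ rfl)
  have hXδσ : ∀ σ : Equiv.Perm (Fin g), (⟨δ, σ⟩ : HyperOct g) ∈ XS := by
    intro σ
    have h1 : (⟨δ, (1 : Equiv.Perm (Fin g))⟩ : HyperOct g) ∈ XS :=
      Subgroup.subset_closure (Set.mem_union_right _ rfl)
    have h3 : (⟨δ, (1 : Equiv.Perm (Fin g))⟩ : HyperOct g) * ⟨1, σ⟩ = ⟨δ, σ⟩ := by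
      refine SemidirectProduct.ext ?_ ?_
      · show δ * (permAction g 1) 1 = δ
        rw [map_one]
        simp
      · show (1 : Equiv.Perm (Fin g)) * σ = σ
        simp
    exact h3 ▸ mul_mem h1 (hXσ σ)
  constructor
  · -- surjectivity
    intro q
    obtain ⟨w, hw⟩ := Quotient.exists_rep q
    set c : ℕ → ℕ :=
      fun l => (Finset.univ.filter fun i : Fin g => B i = l ∧ w.left i = 1).card with hcdef
    have hcb : ∀ l ∈ Finset.Icc 1 k, c l ≤ 𝔟 l := by
      intro l hl
      rw [Finset.mem_Icc] at hl
      calc c l ≤ (Finset.univ.filter fun i : Fin g => B i = l).card := by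
            apply Finset.card_le_card
            intro i hi
            simp only [Finset.mem_filter] at hi ⊢
            exact ⟨hi.1, hi.2.1⟩
        _ = 𝔟 l := cB l hl.1 hl.2
    refine ⟨c, hcb, ?_⟩
    have hfib : ∀ b : ℕ × Multiplicative (ZMod 2),
        (Finset.univ.filter fun a : Fin g => (B a, (wc c).left a) = b).card =
        (Finset.univ.filter fun a : Fin g => (B a, w.left a) = b).card := by
      intro b
      obtain ⟨l, v⟩ := b
      have he : ∀ (ε : SgnVec g), (Finset.univ.filter fun a : Fin g => (B a, ε a) = (l, v))
          = Finset.univ.filter fun a : Fin g => B a = l ∧ ε a = v := by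
        intro ε
        ext i
        simp [Prod.ext_iff]
      rw [he ((wc c).left), he w.left]
      by_cases hl : 1 ≤ l ∧ l ≤ k
      · rcases hmem2 v with hv | hv
        · subst hv
          rw [cA c hcb l hl.1 hl.2]
        · subst hv
          have e3 : (Finset.univ.filter fun i : Fin g =>
              B i = l ∧ (wc c).left i = Multiplicative.ofAdd (1 : ZMod 2))
              = Finset.univ.filter fun i : Fin g => B i = l ∧ ¬ ((wc c).left i = 1) := by
            ext i
            simp only [Finset.mem_filter, Finset.mem_univ, true_and]
            exact and_congr_right fun _ => hvt _
          have e4 : (Finset.univ.filter fun i : Fin g =>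
              B i = l ∧ w.left i = Multiplicative.ofAdd (1 : ZMod 2))
              = Finset.univ.filter fun i : Fin g => B i = l ∧ ¬ (w.left i = 1) := by
            ext i
            simp only [Finset.mem_filter, Finset.mem_univ, true_and]
            exact and_congr_right fun _ => hvt _
          rw [e3, e4]
          have e5 : (Finset.univ.filter fun i : Fin g => B i = l ∧ (wc c).left i = 1).card +
              (Finset.univ.filter fun i : Fin g => B i = l ∧ ¬ ((wc c).left i = 1)).card
                = 𝔟 l := by
            exact cC ((wc c).left) l hl.1 hl.2
          have e6 : (Finset.univ.filter fun i : Fin g => B i = l ∧ w.left i = 1).card +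
              (Finset.univ.filter fun i : Fin g => B i = l ∧ ¬ (w.left i = 1)).card = 𝔟 l := by
            exact cC w.left l hl.1 hl.2
          have e7 := cA c hcb l hl.1 hl.2
          have e8 : (Finset.univ.filter fun i : Fin g => B i = l ∧ w.left i = 1).card = c l :=
            rfl
          omega
      · have hz : ∀ (f : SgnVec g),
            (Finset.univ.filter fun a : Fin g => B a = l ∧ f a = v) = ∅ := by
          intro f
          rw [Finset.filter_eq_empty_iff]
          rintro i - ⟨hBi, -⟩
          obtain ⟨b1, b2, -⟩ := hBs i
          omega
        rw [hz ((wc c).left), hz w.left]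
    obtain ⟨τ, hτ⟩ := exists_perm_comp (f := fun i : Fin g => (B i, (wc c).left i))
        (f' := fun i : Fin g => (B i, w.left i)) hfib
    · have hτB : ∀ i, B (τ i) = B i := fun i => (Prod.ext_iff.mp (hτ i)).1
      have hτε : ∀ i, (wc c).left (τ i) = w.left i := fun i => (Prod.ext_iff.mp (hτ i)).2
      rw [← hw]
      refine (hFiff (wc c) w).mpr ⟨⟨1, τ⁻¹⟩, ?_, ⟨1, τ * w.right⟩, hXσ _, ?_⟩
      · exact (hHmem _).mpr ⟨rfl, fun i => hinvB τ hτB i⟩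
      · refine SemidirectProduct.ext ?_ ?_
        · funext i
          show w.left i = (1 * (wc c).left (τ i)) * 1
          rw [one_mul, mul_one]
          exact (hτε i).symm
        · apply Equiv.ext
          intro i
          show w.right i = τ⁻¹ (τ (w.right i))
          rw [Equiv.Perm.coe_inv, Equiv.symm_apply_apply]
  · -- fibers
    intro c c' hc hc'
    constructor
    · intro hF
      obtain ⟨h, hh, x, hx, heq⟩ := (hFiff (wc c) (wc c')).mp hF
      obtain ⟨hh1, hh2⟩ := (hHmem h).mp hh
      have hxl := hXchar x hx
      have hτ' : ∀ i, B (h.right⁻¹ i) = B i := hinvB h.right hh2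
      have hleq : ∀ i : Fin g,
          (wc c').left i = (wc c).left (h.right⁻¹ i) * x.left (h.right⁻¹ i) := by
        intro i
        have h1 : (wc c').left = (h * wc c * x).left := by rw [heq]
        rw [h1]
        show ((h.left * (permAction g h.right) (wc c).left) *
          (permAction g (h.right * (wc c).right)) x.left) i = _
        rw [hh1, one_mul, hwcr, mul_one]
        rfl
      rcases hxl with hxl | hxl
      · left
        intro l hl
        rw [Finset.mem_Icc] at hl
        have e1 := cA c' hc' l hl.1 hl.2
        have e2 := cA c hc l hl.1 hl.2
        have hv : ∀ i : Fin g, ((wc c').left i = 1 ↔ (wc c).left (h.right⁻¹ i) = 1) := by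
          intro i
          rw [hleq i, hxl]
          show (wc c).left (h.right⁻¹ i) * 1 = 1 ↔ _
          rw [mul_one]
        have e3 : (Finset.univ.filter fun i : Fin g => B i = l ∧ (wc c').left i = 1)
            = Finset.univ.filter fun i : Fin g =>
                B i = l ∧ (wc c).left (h.right⁻¹ i) = 1 := by
          ext i
          simp only [Finset.mem_filter, Finset.mem_univ, true_and]
          exact and_congr_right fun _ => hv i
        have e4 : (Finset.univ.filter fun i : Fin g =>
              B i = l ∧ (wc c).left (h.right⁻¹ i) = 1).card
            = (Finset.univ.filter fun i : Fin g => B i = l ∧ (wc c).left i = 1).card := by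
          exact cP h.right⁻¹ hτ' (fun j => (wc c).left j = 1) inferInstance l
        rw [e3, e4, e2] at e1
        exact e1
      · right
        intro l hl
        rw [Finset.mem_Icc] at hl
        have e1 := cA c' hc' l hl.1 hl.2
        have e2 := cA c hc l hl.1 hl.2
        have hv : ∀ i : Fin g, ((wc c').left i = 1 ↔ ¬ ((wc c).left (h.right⁻¹ i) = 1)) := by
          intro i
          rw [hleq i, hxl]
          show (wc c).left (h.right⁻¹ i) * Multiplicative.ofAdd (1 : ZMod 2) = 1 ↔ _
          exact hone _
        have e3 : (Finset.univ.filter fun i : Fin g => B i = l ∧ (wc c').left i = 1)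
            = Finset.univ.filter fun i : Fin g =>
                B i = l ∧ ¬ ((wc c).left (h.right⁻¹ i) = 1) := by
          ext i
          simp only [Finset.mem_filter, Finset.mem_univ, true_and]
          exact and_congr_right fun _ => hv i
        have e4 : (Finset.univ.filter fun i : Fin g =>
              B i = l ∧ ¬ ((wc c).left (h.right⁻¹ i) = 1)).card
            = (Finset.univ.filter fun i : Fin g => B i = l ∧ ¬ ((wc c).left i = 1)).card := by
          exact cP h.right⁻¹ hτ' (fun j => ¬ ((wc c).left j = 1)) inferInstance l
        have e5 : (Finset.univ.filter fun i : Fin g => B i = l ∧ (wc c).left i = 1).card +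
            (Finset.univ.filter fun i : Fin g => B i = l ∧ ¬ ((wc c).left i = 1)).card = 𝔟 l := by
          exact cC ((wc c).left) l hl.1 hl.2
        rw [e3, e4] at e1
        omega
    · rintro (hcc | hcc)
      · have hee : wc c = wc c' := by
          refine SemidirectProduct.ext ?_ rfl
          rw [hwcl, hwcl]
          funext i
          refine if_congr ?_ rfl rfl
          constructor
          · rintro ⟨l, a1, a2, a3, a4⟩
            exact ⟨l, a1, a2, a3, by
              rw [← hcc l (Finset.mem_Icc.mpr ⟨a1, a2⟩)]; exact a4⟩
          · rintro ⟨l, a1, a2, a3, a4⟩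
            exact ⟨l, a1, a2, a3, by
              rw [hcc l (Finset.mem_Icc.mpr ⟨a1, a2⟩)]; exact a4⟩
        exact congrArg (fun w => (Quotient.mk'' w : DoubleCoset.Quotient H X)) hee
      · -- the reversing involution
        have hrevlt : ∀ i : Fin g, m (B i) + (𝔟 (B i) - 1 - ((i : ℕ) - m (B i))) < g := by
          intro i
          obtain ⟨b1, b2, b3, b4⟩ := hBs i
          have := hmg (B i) b1 b2
          omega
        set rev : Fin g → Fin g :=
          fun i => ⟨m (B i) + (𝔟 (B i) - 1 - ((i : ℕ) - m (B i))), hrevlt i⟩ with hrevdef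
        have hrevval : ∀ i : Fin g,
            (rev i : ℕ) = m (B i) + (𝔟 (B i) - 1 - ((i : ℕ) - m (B i))) := fun i => rfl
        have hrevB : ∀ i, B (rev i) = B i := by
          intro i
          obtain ⟨b1, b2, b3, b4⟩ := hBs i
          exact hBeq (rev i) (B i) b1 b2 (by rw [hrevval]; omega) (by rw [hrevval]; omega)
        have hrev2 : Function.Involutive rev := by
          intro i
          apply Fin.ext
          rw [hrevval, hrevval, hrevB i]
          obtain ⟨b1, b2, b3, b4⟩ := hBs i
          omega
        set τ : Equiv.Perm (Fin g) := Function.Involutive.toPerm rev hrev2 with hτdef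
        refine (hFiff (wc c) (wc c')).mpr ⟨⟨1, τ⟩, ?_, ⟨δ, τ⟩, hXδσ τ, ?_⟩
        · exact (hHmem _).mpr ⟨rfl, fun i => hrevB i⟩
        · refine SemidirectProduct.ext ?_ ?_
          · funext i
            show (wc c').left i = (1 * (wc c).left (rev i)) * Multiplicative.ofAdd (1 : ZMod 2)
            rw [one_mul]
            obtain ⟨b1, b2, b3, b4⟩ := hBs i
            have hbc : c (B i) + c' (B i) = 𝔟 (B i) := hcc (B i) (Finset.mem_Icc.mpr ⟨b1, b2⟩)
            have hcb : c (B i) ≤ 𝔟 (B i) := hc (B i) (Finset.mem_Icc.mpr ⟨b1, b2⟩)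
            have hcb' : c' (B i) ≤ 𝔟 (B i) := hc' (B i) (Finset.mem_Icc.mpr ⟨b1, b2⟩)
            have hwr := hwc1 c hc (rev i)
            rw [hrevB i, hrevval i] at hwr
            by_cases hcase : (i : ℕ) < m (B i) + c' (B i)
            · have hL : (wc c').left i = 1 := (hwc1 c' hc' i).mpr hcase
              have hR : (wc c).left (rev i) = Multiplicative.ofAdd (1 : ZMod 2) :=
                (hvt _).mpr (by rw [hwr]; omega)
              exact hL.trans (show (1 : Multiplicative (ZMod 2)) =
                (wc c).left (rev i) * Multiplicative.ofAdd (1 : ZMod 2) from by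
                  rw [hR]; decide)
            · have hL : (wc c').left i = Multiplicative.ofAdd (1 : ZMod 2) :=
                (hvt _).mpr (fun hp => hcase ((hwc1 c' hc' i).mp hp))
              have hR : (wc c).left (rev i) = 1 := hwr.mpr (by omega)
              exact hL.trans (show (Multiplicative.ofAdd (1 : ZMod 2)) =
                (wc c).left (rev i) * Multiplicative.ofAdd (1 : ZMod 2) from by
                  rw [hR]; decide)
          · exact Equiv.ext fun i => (hrev2 i).symm
end
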